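/- Let φ : ℝⁿ → ℝ ∪ {+∞} be a proper lower semicontinuous convex function with φ(0) = 0. Then φ is a generalized quadratic form (i.e., dom φ is a linear subspace S of ℝⁿ and there is a symmetric linear operator L : S → ℝⁿ with φ(x) = ⟨Lx, x⟩ for all x ∈ S) if and only if the graph of ∂φ is a linear subspace of ℝⁿ × ℝⁿ. -/

import Mathlib

/- STATEMENT 1: a proper lsc convex function φ with φ(0)=0 is a generalized
quadratic form iff the graph of ∂φ is a linear subspace of ℝⁿ × ℝⁿ. -/

open scoped RealInnerProductSpace
open Filter Topology Classical

noncomputable section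

def Subdiff {n : ℕ} (f : EuclideanSpace ℝ (Fin n) → EReal) (x : EuclideanSpace ℝ (Fin n)) :
    Set (EuclideanSpace ℝ (Fin n)) :=
  {v | ∀ y, f x + ((⟪v, y - x⟫ : ℝ) : EReal) ≤ f y}

def ProperFn {n : ℕ} (f : EuclideanSpace ℝ (Fin n) → EReal) : Prop :=
  (∀ x, f x ≠ ⊥) ∧ ∃ x, f x ≠ ⊤

def ConvexFn {n : ℕ} (f : EuclideanSpace ℝ (Fin n) → EReal) : Prop :=
  ∀ x y : EuclideanSpace ℝ (Fin n), ∀ a b : ℝ, 0 ≤ a → 0 ≤ b → a + b = 1 →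
    f (a • x + b • y) ≤ (a : EReal) * f x + (b : EReal) * f y

/-- `φ` is a generalized quadratic form: its effective domain is a linear
subspace `S` and it equals `x ↦ ⟨Lx, x⟩` on `S` for a symmetric linear `L : S → ℝⁿ`. -/
def IsGQF {n : ℕ} (φ : EuclideanSpace ℝ (Fin n) → EReal) : Prop :=
  ∃ (S : Submodule ℝ (EuclideanSpace ℝ (Fin n)))
    (L : S →ₗ[ℝ] EuclideanSpace ℝ (Fin n)),
    (∀ x y : S, ⟪L x, (y : EuclideanSpace ℝ (Fin n))⟫ =
      ⟪(x : EuclideanSpace ℝ (Fin n)), L y⟫) ∧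
    ∀ x : EuclideanSpace ℝ (Fin n),
      φ x = if h : x ∈ S then ((⟪L ⟨x, h⟩, x⟫ : ℝ) : EReal) else ⊤

/- ### Auxiliary lemmas -/

section Aux

variable {n : ℕ} {φ : EuclideanSpace ℝ (Fin n) → EReal}

local notation "E" => EuclideanSpace ℝ (Fin n)

lemma key_t {a b : ℝ} (hb : 0 ≤ b) (H : ∀ t : ℝ, t*a ≤ t^2*b) : a = 0 := by
  have h := H (a/(2*b+1))
  have hpos : (0:ℝ) < 2*b+1 := by linarith
  rw [div_pow, div_mul_eq_mul_div, div_mul_eq_mul_div, div_le_div_iff₀ hpos (by positivity)] at h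
  have h2 : a^2*(b+1) ≤ 0 := by nlinarith
  have : a^2 = 0 := le_antisymm (by nlinarith) (sq_nonneg a)
  exact pow_eq_zero_iff (by norm_num) |>.mp this

lemma quad_const {h : ℝ → ℝ} {K : ℝ} (H : ∀ s t : ℝ, |h s - h t| ≤ K*(s-t)^2) :
    ∀ a b : ℝ, h a = h b := by
  have claim : ∀ m : ℕ, ∀ s t : ℝ, |h s - h t| ≤ K*(s-t)^2/2^m := by
    intro m
    induction m with
    | zero => simpa using H
    | succ m ih =>
      intro s t
      have h1 := ih s ((s+t)/2)
      have h2 := ih ((s+t)/2) t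
      have h3 := abs_sub_le (h s) (h ((s+t)/2)) (h t)
      have e1 : (s - (s+t)/2)^2 = (s-t)^2/4 := by ring
      have e2 : ((s+t)/2 - t)^2 = (s-t)^2/4 := by ring
      rw [e1] at h1; rw [e2] at h2
      calc |h s - h t| ≤ K*((s-t)^2/4)/2^m + K*((s-t)^2/4)/2^m := by linarith
        _ = K*(s-t)^2/2^(m+1) := by ring
  intro a b
  have hlim : Filter.Tendsto (fun m : ℕ => K*(a-b)^2/2^m) atTop (𝓝 0) := by
    simp_rw [div_eq_mul_inv, ← inv_pow]
    simpa using (tendsto_pow_atTop_nhds_zero_of_lt_one (by norm_num : (0:ℝ) ≤ (2:ℝ)⁻¹)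
      (by norm_num)).const_mul (K*(a-b)^2)
  have hle : |h a - h b| ≤ 0 := ge_of_tendsto' hlim (fun m => claim m a b)
  have := abs_nonpos_iff.mp hle
  linarith [sub_eq_zero.mp this]

lemma phi_ne_top (h0 : φ 0 = 0) {x v : E} (hv : v ∈ Subdiff φ x) : φ x ≠ ⊤ := by
  intro h
  have := hv 0
  rw [h, h0] at this
  simp [EReal.top_add_of_ne_bot (EReal.coe_ne_bot _)] at this

lemma phi_eq_coe (hbot : ∀ x, φ x ≠ ⊥) {x : E} (hx : φ x ≠ ⊤) :
    φ x = ((φ x).toReal : EReal) := (EReal.coe_toReal hx (hbot x)).symm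

lemma subgrad_real (hbot : ∀ x, φ x ≠ ⊥) (h0 : φ 0 = 0) {x v y : E}
    (hv : v ∈ Subdiff φ x) (hy : φ y ≠ ⊤) :
    (φ x).toReal + ⟪v, y - x⟫ ≤ (φ y).toReal := by
  have h := hv y
  rw [phi_eq_coe hbot (phi_ne_top h0 hv), phi_eq_coe hbot hy, ← EReal.coe_add] at h
  exact EReal.coe_le_coe_iff.mp h

lemma scaling_val (hbot : ∀ x, φ x ≠ ⊥) (h0 : φ 0 = 0) (hnn : ∀ y, 0 ≤ φ y) {x v : E}
    (hall : ∀ t : ℝ, (t • v) ∈ Subdiff φ (t • x)) :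
    (φ x).toReal = ⟪v, x⟫ / 2 := by
  set c := (⟪v, x⟫ : ℝ) with hc
  set g : ℝ → ℝ := fun t => (φ (t • x)).toReal with hg
  have hne : ∀ t : ℝ, φ (t • x) ≠ ⊤ := fun t => phi_ne_top h0 (hall t)
  have hsub : ∀ s t : ℝ, g t + t*(s-t)*c ≤ g s := by
    intro s t
    have h := subgrad_real hbot h0 (hall t) (hne s)
    have e : ⟪t • v, s • x - t • x⟫ = t*(s-t)*c := by
      rw [show s • x - t • x = (s - t) • x by rw [sub_smul],
        real_inner_smul_left, real_inner_smul_right]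
      ring
    rw [e] at h
    exact h
  have hgnn : ∀ t, 0 ≤ g t := by
    intro t
    have := EReal.toReal_le_toReal (hnn (t • x)) (by simp) (hne t)
    simpa using this
  have hg0 : g 0 = 0 := by simp [hg, h0]
  have hcnn : 0 ≤ c := by
    have h1 := hsub 0 1
    have h2 := hgnn 1
    rw [hg0] at h1
    linarith
  set h : ℝ → ℝ := fun t => g t - c*t^2/2 with hh
  have Habs : ∀ s t : ℝ, |h s - h t| ≤ (c/2)*(s-t)^2 := by
    intro s t
    rw [abs_le]
    constructor
    · have := hsub s t
      simp only [hh]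
      nlinarith
    · have := hsub t s
      simp only [hh]
      nlinarith
  have := quad_const Habs 1 0
  simp only [hh, hg0] at this
  have hg1 : g 1 = (φ x).toReal := by simp [hg]
  rw [hg1] at this
  linarith

lemma lsc_exists_min {K : Set E} (hK : IsCompact K)
    (hne : K.Nonempty) {f : E → EReal} (hf : LowerSemicontinuous f) :
    ∃ p ∈ K, ∀ y ∈ K, f p ≤ f y := by
  set m := sInf (f '' K) with hm
  by_cases htop : ∀ y ∈ K, f y = ⊤
  · obtain ⟨p, hp⟩ := hne
    exact ⟨p, hp, fun y hy => by rw [htop p hp, htop y hy]⟩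
  push_neg at htop
  obtain ⟨y₀, hy₀, hy₀top⟩ := htop
  have hmlt : m < ⊤ := lt_of_le_of_lt (sInf_le ⟨y₀, hy₀, rfl⟩) (lt_top_iff_ne_top.mpr hy₀top)
  set ι := {a : EReal // m < a}
  have : Nonempty ι := ⟨⟨⊤, hmlt⟩⟩
  set C : ι → Set E := fun a => K ∩ {x | f x ≤ a.1} with hC
  have hCne : ∀ a : ι, (C a).Nonempty := by
    intro a
    obtain ⟨z, ⟨x, hx, rfl⟩, hz⟩ := sInf_lt_iff.mp a.2
    exact ⟨x, hx, le_of_lt hz⟩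
  have hCcl : ∀ a : ι, IsClosed (C a) := fun a =>
    hK.isClosed.inter (lowerSemicontinuous_iff_isClosed_preimage.mp hf a.1)
  have hCdir : Directed (· ⊇ ·) C := by
    intro a b
    refine ⟨⟨min a.1 b.1, lt_min a.2 b.2⟩,
      fun x hx => ⟨hx.1, le_trans hx.2 (min_le_left a.1 b.1)⟩,
      fun x hx => ⟨hx.1, le_trans hx.2 (min_le_right a.1 b.1)⟩⟩
  obtain ⟨p, hp⟩ :=
    IsCompact.nonempty_iInter_of_directed_nonempty_isCompact_isClosed C hCdir hCne
      (fun a => hK.inter_right (lowerSemicontinuous_iff_isClosed_preimage.mp hf a.1)) hCcl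
  simp only [Set.mem_iInter] at hp
  have hpK : p ∈ K := (hp ⟨⊤, hmlt⟩).1
  refine ⟨p, hpK, fun y hy => ?_⟩
  have hfpm : f p ≤ m := le_of_forall_gt_imp_ge_of_dense fun c hc => (hp ⟨c, hc⟩).2
  exact hfpm.trans (sInf_le ⟨y, hy, rfl⟩)

lemma key_t' {a b : ℝ} (hb : 0 ≤ b) (H : ∀ t : ℝ, 0 < t → t ≤ 1 → t*a ≤ t^2*b) : a ≤ 0 := by
  by_contra hc
  push_neg at hc
  set t : ℝ := min 1 (a/(2*b+1)) with ht
  have h2b : (0:ℝ) < 2*b+1 := by linarith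
  have ht0 : 0 < t := lt_min one_pos (div_pos hc h2b)
  have ht1 : t ≤ 1 := min_le_left _ _
  have htb : t*(2*b+1) ≤ a := by
    have : t ≤ a/(2*b+1) := min_le_right _ _
    calc t*(2*b+1) ≤ (a/(2*b+1))*(2*b+1) := by nlinarith
      _ = a := by field_simp
  have h := H t ht0 ht1
  have ha : a ≤ t*b := by
    have : t*a ≤ t*(t*b) := by nlinarith
    exact le_of_mul_le_mul_left this ht0
  nlinarith

lemma prox_point (hbot : ∀ x, φ x ≠ ⊥) (hlsc : LowerSemicontinuous φ) (hconv : ConvexFn φ)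
    (h0 : φ 0 = 0) (hnn : ∀ y, 0 ≤ φ y) {x : E} (hx : φ x ≠ ⊤) {ε : ℝ} (hε : 0 < ε) :
    ∃ p v, v ∈ Subdiff φ p ∧ dist p x < ε := by
  set r : ℝ := (φ x).toReal with hr
  have hxcoe : φ x = (r : EReal) := (EReal.coe_toReal hx (hbot x)).symm
  have hrnn : 0 ≤ r := by
    have := EReal.toReal_le_toReal (hnn x) (by simp) hx
    simpa using this
  set c : ℝ := (r+1)/ε^2 with hcdef
  have hcpos : 0 < c := by positivity
  set ψ : E → EReal := fun y => φ y + ((c*‖y-x‖^2 : ℝ) : EReal) with hψ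
  have hψlsc : LowerSemicontinuous ψ := by
    apply hlsc.add'
    · exact (continuous_coe_real_ereal.comp
        (continuous_const.mul ((continuous_id.sub continuous_const).norm.pow 2))).lowerSemicontinuous
    · intro z
      exact EReal.continuousAt_add (Or.inr (EReal.coe_ne_bot _)) (Or.inr (EReal.coe_ne_top _))
  set R : ℝ := Real.sqrt ((r+1)/c) with hR
  have hRnn : 0 ≤ R := Real.sqrt_nonneg _
  have hR2 : c * R^2 = r + 1 := by
    rw [hR, Real.sq_sqrt (by positivity)]
    field_simp
  obtain ⟨p, hpB, hpmin⟩ := lsc_exists_min (isCompact_closedBall x R)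
    ⟨x, Metric.mem_closedBall_self hRnn⟩ hψlsc
  have hψx : ψ x = (r : EReal) := by
    simp [hψ, hxcoe]
  have hψpr : ψ p ≤ (r : EReal) := by
    rw [← hψx]; exact hpmin x (Metric.mem_closedBall_self hRnn)
  -- global min
  have hglobal : ∀ y, ψ p ≤ ψ y := by
    intro y
    by_cases hy : y ∈ Metric.closedBall x R
    · exact hpmin y hy
    · have hyR : R < ‖y - x‖ := by
        simpa [Metric.mem_closedBall, dist_eq_norm] using hy
      have h1 : (r : EReal) < ((c*‖y-x‖^2 : ℝ) : EReal) := by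
        rw [EReal.coe_lt_coe_iff]
        nlinarith [pow_lt_pow_left₀ hyR hRnn (n := 2) (by norm_num), mul_lt_mul_of_pos_left
          (pow_lt_pow_left₀ hyR hRnn (n := 2) (by norm_num)) hcpos]
      calc ψ p ≤ (r : EReal) := hψpr
        _ ≤ ((c*‖y-x‖^2 : ℝ) : EReal) := le_of_lt h1
        _ ≤ ψ y := by
            simp only [hψ]
            simpa using add_le_add_left (hnn y) _
  -- φ p finite, p close to x
  have hφple : φ p ≤ (r : EReal) := by
    calc φ p ≤ ψ p := by
          simp only [hψ]
          simpa using add_le_add_right (by exact_mod_cast mul_nonneg hcpos.le (sq_nonneg _) : (0:EReal) ≤ ((c*‖p-x‖^2 : ℝ) : EReal)) _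
      _ ≤ _ := hψpr
  have hφptop : φ p ≠ ⊤ := by
    intro h
    rw [h] at hφple
    exact absurd hφple (by simp)
  set P : ℝ := (φ p).toReal with hP
  have hpcoe : φ p = (P : EReal) := (EReal.coe_toReal hφptop (hbot p)).symm
  have hPnn : 0 ≤ P := by
    have := EReal.toReal_le_toReal (hnn p) (by simp) hφptop
    simpa using this
  have hdist : c * ‖p - x‖^2 ≤ r := by
    have : ((c*‖p-x‖^2 : ℝ) : EReal) ≤ (r : EReal) := by
      calc ((c*‖p-x‖^2 : ℝ) : EReal) ≤ ψ p := by
            simp only [hψ]; rw [ hpcoe]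
            have : (0:EReal) ≤ (P : EReal) := by exact_mod_cast hPnn
            simpa using add_le_add_left this _
        _ ≤ _ := hψpr
    exact_mod_cast this
  have hdistε : dist p x < ε := by
    rw [dist_eq_norm]
    have hce : c*ε^2 = r+1 := by
      rw [hcdef]; field_simp
    by_contra hge
    push_neg at hge
    have hsq : ε^2 ≤ ‖p-x‖^2 := pow_le_pow_left₀ hε.le hge 2
    nlinarith [mul_le_mul_of_nonneg_left hsq hcpos.le]
  refine ⟨p, (2*c) • (x - p), ?_, hdistε⟩
  -- subgradient property
  intro y
  by_cases hy : φ y = ⊤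
  · rw [hy]; exact le_top
  set Y : ℝ := (φ y).toReal with hY
  have hycoe : φ y = (Y : EReal) := (EReal.coe_toReal hy (hbot y)).symm
  -- key inequality for t ∈ (0,1]
  have hkey : ∀ t : ℝ, 0 < t → t ≤ 1 →
      t * (⟪(2*c) • (x - p), y - p⟫ - (Y - P)) ≤ t^2 * (c * ‖y - p‖^2) := by
    intro t ht0 ht1
    have hmin := hglobal ((1-t) • p + t • y)
    have hcv := hconv p y (1-t) t (by linarith) ht0.le (by ring)
    have hcvr : φ ((1-t) • p + t • y) ≤ (((1-t)*P + t*Y : ℝ) : EReal) := by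
      calc φ ((1-t) • p + t • y) ≤ ((1-t : ℝ) : EReal) * φ p + ((t : ℝ) : EReal) * φ y := hcv
        _ = (((1-t)*P + t*Y : ℝ) : EReal) := by
            rw [hpcoe, hycoe]
            norm_cast
    have hψle : ψ p ≤ (((1-t)*P + t*Y + c*‖(1-t) • p + t • y - x‖^2 : ℝ) : EReal) := by
      calc ψ p ≤ ψ ((1-t) • p + t • y) := hmin
        _ ≤ _ := by
            simp only [hψ]
            rw [show (((1-t)*P + t*Y + c*‖(1-t) • p + t • y - x‖^2 : ℝ) : EReal)
              = (((1-t)*P + t*Y : ℝ) : EReal) + ((c*‖(1-t) • p + t • y - x‖^2 : ℝ) : EReal) by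
                rw [← EReal.coe_add]]
            exact add_le_add_left hcvr _
    have hreal : P + c*‖p-x‖^2 ≤ (1-t)*P + t*Y + c*‖(1-t) • p + t • y - x‖^2 := by
      have : ((P + c*‖p-x‖^2 : ℝ) : EReal) ≤ (((1-t)*P + t*Y + c*‖(1-t) • p + t • y - x‖^2 : ℝ) : EReal) := by
        calc ((P + c*‖p-x‖^2 : ℝ) : EReal) = ψ p := by
              simp only [hψ]; rw [ hpcoe, ← EReal.coe_add]
          _ ≤ _ := hψle
      exact_mod_cast this
    have hexp : ‖(1-t) • p + t • y - x‖^2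
        = ‖p-x‖^2 + 2*t*⟪p-x, y-p⟫ + t^2*‖y-p‖^2 := by
      have e : (1-t) • p + t • y - x = (p-x) + t • (y-p) := by module
      rw [e, @norm_add_sq_real, real_inner_smul_right, norm_smul]
      simp [mul_pow, sq_abs]
      ring
    rw [hexp] at hreal
    have hinner : ⟪(2*c) • (x - p), y - p⟫ = -(2*c)*⟪p-x, y-p⟫ := by
      rw [real_inner_smul_left, (neg_sub p x).symm, inner_neg_left]
      ring
    rw [hinner]
    nlinarith
  have hle : ⟪(2*c) • (x - p), y - p⟫ - (Y - P) ≤ 0 :=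
    key_t' (mul_nonneg hcpos.le (sq_nonneg _)) hkey
  rw [hpcoe, hycoe, ← EReal.coe_add, EReal.coe_le_coe_iff]
  linarith

lemma forward_dir {S : Submodule ℝ (EuclideanSpace ℝ (Fin n))}
    {L : S →ₗ[ℝ] EuclideanSpace ℝ (Fin n)} (hconv : ConvexFn φ) (h0 : φ 0 = 0)
    (hsym : ∀ x y : S, ⟪L x, (y : E)⟫ = ⟪(x : E), L y⟫)
    (hφ : ∀ x : E, φ x = if h : x ∈ S then ((⟪L ⟨x, h⟩, x⟫ : ℝ) : EReal) else ⊤) :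
    ∃ G : Submodule ℝ (E × E),
      (G : Set (E × E)) = {p | p.2 ∈ Subdiff φ p.1} := by
  -- φ agrees with the quadratic form on S
  have hφS : ∀ (x : E) (hx : x ∈ S), φ x = ((⟪L ⟨x, hx⟩, x⟫ : ℝ) : EReal) := by
    intro x hx; rw [hφ x, dif_pos hx]
  have hφT : ∀ x : E, x ∉ S → φ x = ⊤ := by
    intro x hx; rw [hφ x, dif_neg hx]
  -- positive semidefiniteness
  have hpsd : ∀ u : S, 0 ≤ ⟪L u, (u : E)⟫ := by
    intro u
    have hc := hconv (u : E) (-(u : E)) (1/2) (1/2) (by norm_num) (by norm_num) (by norm_num)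
    have hmid : (1/2 : ℝ) • (u : E) + (1/2 : ℝ) • (-(u : E)) = 0 := by module
    rw [hmid, h0] at hc
    have hmem : -(u : E) ∈ S := neg_mem u.2
    rw [hφS _ u.2, hφS _ hmem] at hc
    have hLneg : L ⟨-(u : E), hmem⟩ = -(L u) := by
      rw [show (⟨-(u : E), hmem⟩ : S) = -u from Subtype.ext rfl, map_neg]
    rw [hLneg] at hc
    have hinner : ⟪-(L u), -(u : E)⟫ = ⟪L u, (u : E)⟫ := by
      rw [inner_neg_neg]
    rw [hinner] at hc
    simp only [Subtype.coe_eta] at hc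
    have hre : (0:ℝ) ≤ 1/2 * ⟪L u, (u : E)⟫ + 1/2 * ⟪L u, (u : E)⟫ := by exact_mod_cast hc
    linarith
  -- characterization of Subdiff
  have hchar : ∀ (x : E) (v : E), v ∈ Subdiff φ x ↔
      ∃ hx : x ∈ S, ∀ u ∈ S, ⟪v, u⟫ = 2*⟪L ⟨x, hx⟩, u⟫ := by
    intro x v
    constructor
    · intro hv
      have hxS : x ∈ S := by
        by_contra hxS
        have := hv 0
        rw [hφT x hxS, h0] at this
        simp [EReal.top_add_of_ne_bot (EReal.coe_ne_bot _)] at this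
      refine ⟨hxS, fun u hu => ?_⟩
      have hqx := hφS x hxS
      have key : ∀ t : ℝ, t * (⟪v, u⟫ - 2*⟪L ⟨x, hxS⟩, u⟫) ≤ t^2 * ⟪L ⟨u, hu⟩, u⟫ := by
        intro t
        have hyS : x + t • u ∈ S := add_mem hxS (S.smul_mem t hu)
        have hsplit : (⟨x + t • u, hyS⟩ : S) = ⟨x, hxS⟩ + t • ⟨u, hu⟩ := Subtype.ext rfl
        have hq : ⟪L ⟨x + t • u, hyS⟩, x + t • u⟫
            = ⟪L ⟨x, hxS⟩, x⟫ + 2*t*⟪L ⟨x, hxS⟩, u⟫ + t^2*⟪L ⟨u, hu⟩, u⟫ := by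
          rw [hsplit, map_add, map_smul]
          rw [inner_add_left, inner_add_right, inner_add_right,
            inner_smul_left, inner_smul_right, inner_smul_left, inner_smul_right]
          have : ⟪L ⟨u, hu⟩, x⟫ = ⟪L ⟨x, hxS⟩, u⟫ := by
            rw [hsym ⟨u, hu⟩ ⟨x, hxS⟩]
            exact real_inner_comm _ _
          simp only [RCLike.ofReal_real_eq_id, id_eq, conj_trivial] at *
          rw [this]
          ring
        have h1 := hv (x + t • u)
        rw [hqx, hφS _ hyS, hq] at h1
        have h2 : ⟪v, x + t • u - x⟫ = t * ⟪v, u⟫ := by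
          rw [show x + t • u - x = t • u by abel, real_inner_smul_right]
        rw [h2, ← EReal.coe_add, EReal.coe_le_coe_iff] at h1
        nlinarith
      have := key_t (hpsd ⟨u, hu⟩) key
      linarith
    · rintro ⟨hxS, hv⟩
      intro y
      by_cases hyS : y ∈ S
      · rw [hφS x hxS, hφS y hyS, ← EReal.coe_add, EReal.coe_le_coe_iff]
        have hyx : y - x ∈ S := sub_mem hyS hxS
        have hv' := hv (y - x) hyx
        have hsplit : (⟨y - x, hyx⟩ : S) = ⟨y, hyS⟩ - ⟨x, hxS⟩ := Subtype.ext rfl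
        have hpsd' := hpsd ⟨y - x, hyx⟩
        have hexp : ⟪L ⟨y - x, hyx⟩, y - x⟫
            = ⟪L ⟨y, hyS⟩, y⟫ - 2*⟪L ⟨x, hxS⟩, y⟫ + ⟪L ⟨x, hxS⟩, x⟫ := by
          rw [hsplit, map_sub, inner_sub_left, inner_sub_right, inner_sub_right]
          have h1 : ⟪L ⟨y, hyS⟩, x⟫ = ⟪L ⟨x, hxS⟩, y⟫ := by
            rw [hsym ⟨y, hyS⟩ ⟨x, hxS⟩]; exact real_inner_comm _ _
          rw [h1]; ring
        have hv2 : ⟪v, y - x⟫ = 2*⟪L ⟨x, hxS⟩, y⟫ - 2*⟪L ⟨x, hxS⟩, x⟫ := by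
          rw [hv', inner_sub_right]
          ring
        rw [hv2] at *
        nlinarith
      · rw [hφT y hyS]; exact le_top
  refine ⟨{
    carrier := {p : E × E | ∃ h : p.1 ∈ S, ∀ u ∈ S, ⟪p.2, u⟫ = 2*⟪L ⟨p.1, h⟩, u⟫}
    add_mem' := ?_
    zero_mem' := ?_
    smul_mem' := ?_ }, ?_⟩
  · rintro p q ⟨hp, hp2⟩ ⟨hq, hq2⟩
    refine ⟨add_mem hp hq, fun u hu => ?_⟩
    have hsplit : (⟨(p + q).1, add_mem hp hq⟩ : S) = ⟨p.1, hp⟩ + ⟨q.1, hq⟩ := Subtype.ext rfl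
    rw [hsplit, map_add, inner_add_left]
    show ⟪p.2 + q.2, u⟫ = _
    rw [inner_add_left, hp2 u hu, hq2 u hu]
    ring
  · exact ⟨S.zero_mem, fun u hu => by
      have : (⟨(0 : E × E).1, S.zero_mem⟩ : S) = 0 := Subtype.ext rfl
      rw [this, map_zero]
      simp⟩
  · rintro t p ⟨hp, hp2⟩
    refine ⟨S.smul_mem t hp, fun u hu => ?_⟩
    have hsplit : (⟨(t • p).1, S.smul_mem t hp⟩ : S) = t • ⟨p.1, hp⟩ := Subtype.ext rfl
    rw [hsplit, map_smul, real_inner_smul_left]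
    show ⟪t • p.2, u⟫ = _
    rw [real_inner_smul_left, hp2 u hu]
    ring
  · ext p
    simp only [Set.mem_setOf_eq]
    constructor
    · rintro ⟨h, h2⟩
      exact (hchar p.1 p.2).mpr ⟨h, h2⟩
    · intro hp
      exact (hchar p.1 p.2).mp hp

lemma under_test {G : Submodule ℝ (EuclideanSpace ℝ (Fin n) × EuclideanSpace ℝ (Fin n))}
    (hbot : ∀ x, φ x ≠ ⊥) (h0 : φ 0 = 0)
    (hG : (G : Set (E × E)) = {p | p.2 ∈ Subdiff φ p.1})
    (hscal : ∀ x v : E, (∀ t : ℝ, (t • v) ∈ Subdiff φ (t • x)) → (φ x).toReal = ⟪v, x⟫ / 2)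
    (hprox : ∀ x : E, φ x ≠ ⊤ → ∀ ε : ℝ, 0 < ε → ∃ p v, v ∈ Subdiff φ p ∧ dist p x < ε) :
    ∃ (S : Submodule ℝ (EuclideanSpace ℝ (Fin n)))
      (L : S →ₗ[ℝ] EuclideanSpace ℝ (Fin n)),
      (∀ x y : S, ⟪L x, (y : EuclideanSpace ℝ (Fin n))⟫ =
        ⟪(x : EuclideanSpace ℝ (Fin n)), L y⟫) ∧
      ∀ x : EuclideanSpace ℝ (Fin n),
        φ x = if h : x ∈ S then ((⟪L ⟨x, h⟩, x⟫ : ℝ) : EReal) else ⊤ := by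
  have memG : ∀ p : E × E, p ∈ G ↔ p.2 ∈ Subdiff φ p.1 := fun p => by
    constructor
    · intro h; exact (hG ▸ (show p ∈ (G : Set (E × E)) from h) : _)
    · intro h; have : p ∈ (G : Set (E × E)) := hG ▸ h; exact this
  have hnn : ∀ y : E, 0 ≤ φ y := by
    intro y
    have h00 : (0 : E) ∈ Subdiff φ 0 := by
      have := (memG 0).mp G.zero_mem
      simpa using this
    have := h00 y
    simpa [h0] using this
  -- subgradient value identity
  have hval : ∀ x v : E, (x, v) ∈ G → (φ x).toReal = ⟪v, x⟫ / 2 := by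
    intro x v hxv
    apply hscal
    intro t
    have : t • (x, v) ∈ G := G.smul_mem t hxv
    exact (memG _).mp this
  have hsubmem : ∀ x v : E, (x, v) ∈ G → v ∈ Subdiff φ x := fun x v h => (memG _).mp h
  -- the domain submodule and linear selection
  set S : Submodule ℝ (EuclideanSpace ℝ (Fin n)) := G.map (LinearMap.fst ℝ E E) with hS
  set G₀ : Submodule ℝ (EuclideanSpace ℝ (Fin n)) := G.comap (LinearMap.inr ℝ E E) with hG₀
  set K : Submodule ℝ (EuclideanSpace ℝ (Fin n)) := G₀ᗮ with hK
  have hKperp : Kᗮ = G₀ := Submodule.orthogonal_orthogonal G₀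
  have hFex : ∀ x, x ∈ S → ∃ a : E, (x, a) ∈ G ∧ a ∈ K := by
    intro x hx
    obtain ⟨p, hpG, hp1⟩ := Submodule.mem_map.mp hx
    simp only [LinearMap.fst_apply] at hp1
    have hpx : ((x : E), p.2) ∈ G := by
      rw [← hp1]
      exact hpG
    set a : E := (K.orthogonalProjectionOnto p.2 : E) with ha
    have hsub : p.2 - a ∈ Kᗮ := Submodule.sub_starProjection_mem_orthogonal (K := K) p.2
    rw [hKperp] at hsub
    have h0a : ((0 : E), p.2 - a) ∈ G := hsub
    refine ⟨a, ?_, (K.orthogonalProjectionOnto p.2).2⟩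
    have : ((x : E), a) = ((x : E), p.2) - ((0 : E), p.2 - a) := by
      simp [Prod.ext_iff]
    rw [this]
    exact G.sub_mem hpx h0a
  have hFuniq : ∀ (x a b : E), (x, a) ∈ G → a ∈ K → (x, b) ∈ G → b ∈ K → a = b := by
    intro x a b haG haK hbG hbK
    have habG : ((0:E), a - b) ∈ G := by
      have : ((0:E), a - b) = ((x:E), a) - ((x:E), b) := by simp [Prod.ext_iff]
      rw [this]; exact G.sub_mem haG hbG
    have habG₀ : a - b ∈ G₀ := habG
    have habK : a - b ∈ K := K.sub_mem haK hbK
    have : ⟪a - b, a - b⟫ = 0 := (Submodule.mem_orthogonal G₀ (a-b)).mp habK _ habG₀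
    have := inner_self_eq_zero.mp this
    exact sub_eq_zero.mp this
  set F : E → E := fun x => if hx : x ∈ S then Classical.choose (hFex x hx) else 0 with hF
  have hFspec : ∀ (x : E), x ∈ S → (x, F x) ∈ G ∧ F x ∈ K := by
    intro x hx
    simp only [hF, dif_pos hx]
    exact Classical.choose_spec (hFex x hx)
  have hFadd : ∀ x y : E, x ∈ S → y ∈ S → F (x + y) = F x + F y := by
    intro x y hx hy
    have hxy : x + y ∈ S := S.add_mem hx hy
    refine hFuniq (x+y) _ _ (hFspec _ hxy).1 (hFspec _ hxy).2 ?_ ?_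
    · have : ((x+y : E), F x + F y) = ((x:E), F x) + ((y:E), F y) := rfl
      rw [this]; exact G.add_mem (hFspec x hx).1 (hFspec y hy).1
    · exact K.add_mem (hFspec x hx).2 (hFspec y hy).2
  have hFsmul : ∀ (c : ℝ) (x : E), x ∈ S → F (c • x) = c • F x := by
    intro c x hx
    have hcx : c • x ∈ S := S.smul_mem c hx
    refine hFuniq (c • x) _ _ (hFspec _ hcx).1 (hFspec _ hcx).2 ?_ ?_
    · have : ((c • x : E), c • F x) = c • ((x:E), F x) := rfl
      rw [this]; exact G.smul_mem c (hFspec x hx).1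
    · exact K.smul_mem c (hFspec x hx).2
  set L : S →ₗ[ℝ] E :=
    { toFun := fun s => (2⁻¹ : ℝ) • F (s : E)
      map_add' := by
        intro a b
        simp only [Submodule.coe_add, hFadd _ _ a.2 b.2, smul_add]
      map_smul' := by
        intro c a
        simp only [SetLike.val_smul, hFsmul c _ a.2, RingHom.id_apply]
        rw [smul_comm] } with hL
  -- symmetry
  have hsymG : ∀ x v y w : E, (x, v) ∈ G → (y, w) ∈ G → ⟪v, y⟫ = ⟪w, x⟫ := by
    intro x v y w hxv hyw
    set A := (⟪v, x⟫ : ℝ); set B := (⟪v, y⟫ : ℝ); set C := (⟪w, x⟫ : ℝ); set D := (⟪w, y⟫ : ℝ)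
    have hD : 0 ≤ D := by
      have := hval y w hyw
      have hy0 : (0:ℝ) ≤ (φ y).toReal := by
        have h1 := EReal.toReal_le_toReal (hnn y) (by simp) (phi_ne_top h0 (hsubmem y w hyw))
        simpa using h1
      rw [this] at hy0
      linarith
    have key : ∀ t : ℝ, t * (B - C) ≤ t^2 * D := by
      intro t
      have hmem : (x + t • y, v + t • w) ∈ G := by
        have : (x + t • y, v + t • w) = (x, v) + t • (y, w) := rfl
        rw [this]; exact G.add_mem hxv (G.smul_mem t hyw)
      have hvalxy := hval _ _ hmem
      have hvalx := hval x v hxv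
      have hsg := subgrad_real hbot h0 (hsubmem x v hxv) (phi_ne_top h0 (hsubmem _ _ hmem))
      have hinner1 : ⟪v, x + t • y - x⟫ = t * B := by
        rw [show x + t • y - x = t • y by abel, real_inner_smul_right]
      have hinner2 : (⟪v + t • w, x + t • y⟫ : ℝ) = A + t*B + t*C + t^2*D := by
        rw [inner_add_left, inner_add_right, inner_add_right, real_inner_smul_left,
          real_inner_smul_left, real_inner_smul_right, real_inner_smul_right]
        ring
      rw [hinner1, hvalxy, hvalx, hinner2] at hsg
      nlinarith
    have hBC := key_t hD key
    linarith
  -- domain is contained in S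
  have hdom : ∀ x : E, φ x ≠ ⊤ → x ∈ S := by
    intro x hx
    have hclosed : IsClosed (S : Set E) := Submodule.closed_of_finiteDimensional S
    have hxcl : x ∈ closure (S : Set E) := by
      rw [Metric.mem_closure_iff]
      intro ε hε
      obtain ⟨p, v, hpv, hd⟩ := hprox x hx ε hε
      have hpS : p ∈ S := ⟨(p, v), (memG _).mpr hpv, rfl⟩
      exact ⟨p, hpS, by rwa [dist_comm]⟩
    rwa [hclosed.closure_eq] at hxcl
  refine ⟨S, L, ?_, ?_⟩
  · intro a b
    have h1 : ⟪F (a:E), (b:E)⟫ = ⟪F (b:E), (a:E)⟫ :=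
      hsymG _ _ _ _ (hFspec _ a.2).1 (hFspec _ b.2).1
    simp only [hL, LinearMap.coe_mk, AddHom.coe_mk, real_inner_smul_left, real_inner_smul_right]
    rw [h1, real_inner_comm]
  · intro x
    by_cases hx : x ∈ S
    · rw [dif_pos hx]
      have hxG := (hFspec x hx).1
      have hne : φ x ≠ ⊤ := phi_ne_top h0 (hsubmem _ _ hxG)
      rw [phi_eq_coe hbot hne, hval x (F x) hxG]
      congr 1
      simp only [hL, LinearMap.coe_mk, AddHom.coe_mk, real_inner_smul_left]
      ring
    · rw [dif_neg hx]
      by_contra hne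
      exact hx (hdom x hne)

end Aux

theorem statement1 {n : ℕ} (φ : EuclideanSpace ℝ (Fin n) → EReal)
    (hproper : ProperFn φ) (hlsc : LowerSemicontinuous φ) (hconv : ConvexFn φ)
    (h0 : φ 0 = 0) :
    IsGQF φ ↔
      ∃ G : Submodule ℝ (EuclideanSpace ℝ (Fin n) × EuclideanSpace ℝ (Fin n)),
        (G : Set (EuclideanSpace ℝ (Fin n) × EuclideanSpace ℝ (Fin n))) =
          {p | p.2 ∈ Subdiff φ p.1} := by
  constructor
  · rintro ⟨S, L, hsym, hφ⟩
    exact forward_dir hconv h0 hsym hφ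
  · rintro ⟨G, hG⟩
    have memG : ∀ p : EuclideanSpace ℝ (Fin n) × EuclideanSpace ℝ (Fin n),
        p ∈ G ↔ p.2 ∈ Subdiff φ p.1 := fun p => by
      constructor
      · intro h
        exact (hG ▸ (show p ∈ (G : Set _) from h) : _)
      · intro h
        have : p ∈ (G : Set _) := hG ▸ h
        exact this
    have hnn : ∀ y, 0 ≤ φ y := by
      intro y
      have h00 : (0 : EuclideanSpace ℝ (Fin n)) ∈ Subdiff φ 0 := by
        have := (memG 0).mp G.zero_mem
        simpa using this
      have := h00 y
      simpa [h0] using this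
    exact under_test hproper.1 h0 hG
      (fun x v hall => scaling_val hproper.1 h0 hnn hall)
      (fun x hx ε hε => prox_point hproper.1 hlsc hconv h0 hnn hx hε)

end
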